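/- Let q be a prime power, let B be an (mμ) × (mn) matrix over F_q with kernel ker(B) = { x ∈ F_q^{mn} : Bx = 0 } and image im(B) = { Bx : x ∈ F_q^{mn} }, and let ℒ be a subgroup of the group of all bijective F_q-linear maps on F_q^{mn}, with L uniformly distributed on ℒ. Then the family of functions { x ↦ BLx : L ∈ ℒ } (with uniformly distributed L) is a family of two-universal hash functions from F_q^{mn} to im(B) if and only if for every nonzero v ∈ F_q^{mn}, |O(v) ∩ ker(B)| / |O(v)| ≤ 1 / |im(B)|, where O(v) = { Lv : L ∈ ℒ } is the orbit of v under ℒ. -/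

import Mathlib

open MulAction

instance glAction {N : ℕ} {F : Type*} [CommRing F] :
    MulAction (GL (Fin N) F) (Fin N → F) where
  smul g x := (g : Matrix (Fin N) (Fin N) F).mulVec x
  one_smul x := show ((1 : GL (Fin N) F) : Matrix (Fin N) (Fin N) F).mulVec x = x by simp
  mul_smul g h x := show ((g * h : GL (Fin N) F) : Matrix (Fin N) (Fin N) F).mulVec x
      = (g : Matrix (Fin N) (Fin N) F).mulVec ((h : Matrix (Fin N) (Fin N) F).mulVec x) by
    simp [Matrix.mulVec_mulVec]

lemma fiber_card_eq {G X : Type*} [Group G] [Fintype G] [DecidableEq X] [MulAction G X]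
    (v w : X) (hw : ∃ g : G, g • v = w) :
    (Finset.univ.filter fun g : G => g • v = w).card
      = (Finset.univ.filter fun g : G => g • v = v).card := by
  obtain ⟨g₀, hg₀⟩ := hw
  apply Finset.card_bij (fun g _ => g₀⁻¹ * g)
  · intro g hg
    simp only [Finset.mem_filter, Finset.mem_univ, true_and] at hg ⊢
    rw [mul_smul, hg, inv_smul_eq_iff, hg₀]
  · intro a _ b _ h
    exact mul_left_cancel h
  · intro b hb
    simp only [Finset.mem_filter, Finset.mem_univ, true_and] at hb
    exact ⟨g₀ * b, by simp [Finset.mem_filter, mul_smul, hb, hg₀], by group⟩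

lemma count_eq {G X : Type*} [Group G] [Fintype G] [Fintype X] [DecidableEq X] [MulAction G X]
    (v : X) (K : Set X) :
    {g : G | g • v ∈ K}.ncard
      = (orbit G v ∩ K).ncard * (Finset.univ.filter fun g : G => g • v = v).card := by
  classical
  rw [Set.ncard_eq_toFinset_card', Set.ncard_eq_toFinset_card', Set.toFinset_setOf]
  rw [Finset.card_eq_sum_card_fiberwise
    (f := fun g : G => g • v) (t := (orbit G v ∩ K).toFinset)
    (fun g hg => by
      simp only [Finset.mem_coe, Finset.mem_filter, Finset.mem_univ, true_and] at hg
      simp only [Finset.mem_coe, Set.mem_toFinset, Set.mem_inter_iff]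
      exact ⟨⟨g, rfl⟩, hg⟩)]
  have key : ∀ w ∈ (orbit G v ∩ K).toFinset,
      ((Finset.univ.filter fun g : G => g • v ∈ K).filter fun g => g • v = w).card
        = (Finset.univ.filter fun g : G => g • v = v).card := by
    intro w hw
    simp only [Set.mem_toFinset, Set.mem_inter_iff] at hw
    rw [show (Finset.univ.filter fun g : G => g • v ∈ K).filter (fun g => g • v = w)
        = Finset.univ.filter fun g : G => g • v = w by
      ext g
      simp only [Finset.mem_filter, Finset.mem_univ, true_and]
      exact ⟨fun h => h.2, fun h => ⟨h ▸ hw.2, h⟩⟩]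
    exact fiber_card_eq v w hw.1
  rw [Finset.sum_congr rfl key, Finset.sum_const, smul_eq_mul]

lemma ratio_eq {G X : Type*} [Group G] [Fintype G] [Fintype X] [DecidableEq X] [MulAction G X]
    (v : X) (K : Set X) :
    (({g : G | g • v ∈ K}.ncard : ℝ)) / (Nat.card G : ℝ)
      = ((orbit G v ∩ K).ncard : ℝ) / ((orbit G v).ncard : ℝ) := by
  classical
  have hG : Nat.card G
      = (orbit G v).ncard * (Finset.univ.filter fun g : G => g • v = v).card := by
    have h := count_eq (G := G) v (Set.univ : Set X)
    simp only [Set.mem_univ, Set.setOf_true, Set.inter_univ, Set.ncard_univ] at h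
    exact h
  have hs : 0 < (Finset.univ.filter fun g : G => g • v = v).card :=
    Finset.card_pos.2 ⟨1, by simp⟩
  rw [count_eq v K, hG]
  push_cast
  rw [mul_div_mul_right _ _ (by exact_mod_cast hs.ne')]

lemma ncard_sub_eq {G : Type*} [Group G] (ℒ : Subgroup G) (P : G → Prop) :
    {L : G | L ∈ ℒ ∧ P L}.ncard = {g : ℒ | P ↑g}.ncard := by
  rw [← Nat.card_coe_set_eq, ← Nat.card_coe_set_eq]
  exact Nat.card_congr
    ⟨fun x => ⟨⟨x.1, x.2.1⟩, x.2.2⟩, fun y => ⟨y.1.1, y.1.2, y.2⟩,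
      fun _ => rfl, fun _ => rfl⟩

/-- The orbit `O(z) = { Lz : L ∈ ℒ }` of a vector `z ∈ F^N` under a subgroup `ℒ`
of the group of all bijective linear maps (invertible matrices) on `F^N`. -/
def orbitSet {N : ℕ} {F : Type*} [Field F] [Fintype F] [DecidableEq F]
    (ℒ : Subgroup (GL (Fin N) F)) (z : Fin N → F) : Set (Fin N → F) :=
  {w | ∃ L ∈ ℒ, (L : Matrix (Fin N) (Fin N) F).mulVec z = w}

lemma orbitSet_eq_orbit {N : ℕ} {F : Type*} [Field F] [Fintype F] [DecidableEq F]
    (ℒ : Subgroup (GL (Fin N) F)) (z : Fin N → F) : orbitSet ℒ z = orbit ℒ z := by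
  ext w
  constructor
  · rintro ⟨L, hL, h⟩; exact ⟨⟨L, hL⟩, h⟩
  · rintro ⟨g, rfl⟩; exact ⟨g.1, g.2, rfl⟩

lemma main_ratio {N : ℕ} {F : Type*} [Field F] [Fintype F] [DecidableEq F]
    {M : ℕ} (B : Matrix (Fin M) (Fin N) F) (ℒ : Subgroup (GL (Fin N) F))
    (v : Fin N → F) :
    (({L : GL (Fin N) F | L ∈ ℒ ∧
        B.mulVec ((L : Matrix (Fin N) (Fin N) F).mulVec v) = 0}.ncard : ℝ))
        / (Nat.card ℒ : ℝ)
      = ((orbitSet ℒ v ∩ {x | B.mulVec x = 0}).ncard : ℝ)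
        / ((orbitSet ℒ v).ncard : ℝ) := by
  classical
  rw [ncard_sub_eq ℒ
    (fun L => B.mulVec ((L : Matrix (Fin N) (Fin N) F).mulVec v) = 0),
    orbitSet_eq_orbit]
  exact ratio_eq (G := ℒ) v {x | B.mulVec x = 0}

/-- For an `(mμ) × (mn)` matrix `B` over `F_q` and a subgroup `ℒ`
of the bijective linear maps on `F_q^{mn}` with `L` uniformly distributed on `ℒ`,
the family `{x ↦ BLx : L ∈ ℒ}` is two-universal from `F_q^{mn}` to `im(B)`
(i.e. for all `x1 ≠ x2`, `Pr_L[BLx1 = BLx2] ≤ 1/|im B|`) if and only if every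
nonzero `v` satisfies `|O(v) ∩ ker B| / |O(v)| ≤ 1 / |im B|`. -/
theorem two_universal_iff_orbit_kernel_bound {F : Type*} [Field F] [Fintype F] [DecidableEq F]
    (m n μ : ℕ) (hm : 0 < m) (hn : 0 < n) (hμ : 0 < μ)
    (B : Matrix (Fin (m * μ)) (Fin (m * n)) F)
    (ℒ : Subgroup (GL (Fin (m * n)) F)) :
    (∀ x1 x2 : Fin (m * n) → F, x1 ≠ x2 →
        (({L : GL (Fin (m * n)) F | L ∈ ℒ ∧
            B.mulVec ((L : Matrix (Fin (m * n)) (Fin (m * n)) F).mulVec x1)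
              = B.mulVec ((L : Matrix (Fin (m * n)) (Fin (m * n)) F).mulVec x2)}.ncard : ℝ)
            / (Nat.card ℒ : ℝ)
          ≤ 1 / ((Set.range B.mulVec).ncard : ℝ)))
      ↔ (∀ v : Fin (m * n) → F, v ≠ 0 →
          (((orbitSet ℒ v ∩ {x | B.mulVec x = 0}).ncard : ℝ)
              / ((orbitSet ℒ v).ncard : ℝ)
            ≤ 1 / ((Set.range B.mulVec).ncard : ℝ))) := by
  have hset : ∀ x1 x2 : Fin (m * n) → F,
      {L : GL (Fin (m * n)) F | L ∈ ℒ ∧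
          B.mulVec ((L : Matrix (Fin (m * n)) (Fin (m * n)) F).mulVec x1)
            = B.mulVec ((L : Matrix (Fin (m * n)) (Fin (m * n)) F).mulVec x2)}
        = {L : GL (Fin (m * n)) F | L ∈ ℒ ∧
            B.mulVec ((L : Matrix (Fin (m * n)) (Fin (m * n)) F).mulVec (x1 - x2)) = 0} := by
    intro x1 x2
    ext L
    simp only [Set.mem_setOf_eq, and_congr_right_iff]
    intro _
    rw [Matrix.mulVec_sub, Matrix.mulVec_sub, sub_eq_zero]
  constructor
  · intro h v hv
    have h2 := h v 0 hv
    rw [hset v 0, sub_zero, main_ratio] at h2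
    exact h2
  · intro h x1 x2 hne
    rw [hset x1 x2, main_ratio]
    exact h (x1 - x2) (sub_ne_zero.2 hne)
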